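/- Let a ∈ ℝ^d be a nonzero vector with exactly s nonzero entries, s ≥ 1. Then the hyperplane {x ∈ ℝ^d : a^t x = 0} contains at most C(s, ⌊s/2⌋) · 2^{d−s} vectors from {0,1}^d. -/

import Mathlib

open scoped Classical
open Filter Matrix

noncomputable section

/-- A 0/1-matrix (with `Bool` entries) viewed as a real matrix. -/
def bmToR {m n : Type*} (M : Matrix m n Bool) : Matrix m n ℝ :=
  fun i j => if M i j then 1 else 0

/-- A 0/1-vector (with `Bool` entries) viewed as a vector in `ℝ^d`. -/
def bvToR {d : ℕ} (v : Fin d → Bool) : Fin d → ℝ := fun i => if v i then 1 else 0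

/-- Sperner's theorem relative to a ground set `S`. -/
lemma sperner_ground {α : Type*} [Fintype α] [DecidableEq α] (S : Finset α)
    (ℬ : Finset (Finset α)) (hsub : ∀ T ∈ ℬ, T ⊆ S)
    (hac : ∀ T ∈ ℬ, ∀ T' ∈ ℬ, T ⊆ T' → T = T') :
    ℬ.card ≤ S.card.choose (S.card / 2) := by
  classical
  set e : Finset α → Finset {x // x ∈ S} := fun T => T.subtype (· ∈ S) with he
  have key : ∀ T T', T ⊆ S → e T ⊆ e T' → T ⊆ T' := by
    intro T T' hTS h i hi
    have h1 : (⟨i, hTS hi⟩ : {x // x ∈ S}) ∈ e T := by simp [he, hi]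
    have h2 := h h1
    simpa [he] using h2
  have hinj : Set.InjOn e ℬ := by
    intro T hT T' hT' hEq
    exact subset_antisymm (key T T' (hsub T hT) hEq.le) (key T' T (hsub T' hT') hEq.ge)
  have hcard : ℬ.card = (ℬ.image e).card := (Finset.card_image_of_injOn hinj).symm
  have hanti : IsAntichain (· ⊆ ·)
      ((ℬ.image e : Finset (Finset {x // x ∈ S})) : Set (Finset {x // x ∈ S})) := by
    intro B hB B' hB' hne hsubB
    simp only [Finset.coe_image, Set.mem_image, Finset.mem_coe] at hB hB'
    obtain ⟨T, hT, rfl⟩ := hB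
    obtain ⟨T', hT', rfl⟩ := hB'
    exact hne (congrArg e (hac T hT T' hT' (key T T' (hsub T hT) hsubB)))
  have hS := IsAntichain.sperner hanti
  rw [Fintype.card_coe] at hS
  omega

/-- If `a ∈ ℝ^d` is nonzero with exactly `s ≥ 1` nonzero entries, then the hyperplane
`{x : aᵗx = 0}` contains at most `C(s, ⌊s/2⌋) · 2^{d-s}` vectors from `{0,1}^d`. -/
theorem stmt15 (d s : ℕ) (a : Fin d → ℝ) (ha : a ≠ 0) (hs1 : 1 ≤ s)
    (hs : (Finset.univ.filter (fun i => a i ≠ 0)).card = s) :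
    (Finset.univ.filter (fun x : Fin d → Bool => ∑ i, a i * bvToR x i = 0)).card
      ≤ s.choose (s / 2) * 2 ^ (d - s) := by
  classical
  set S : Finset (Fin d) := Finset.univ.filter (fun i => a i ≠ 0) with hSdef
  have hmemS : ∀ i, i ∈ S ↔ a i ≠ 0 := by
    intro i; simp [hSdef]
  set 𝒜 : Finset (Finset (Fin d)) :=
    S.powerset.filter (fun T => ∑ i ∈ T, a i = 0) with h𝒜def
  -- Step A : the number of solutions is at most |𝒜| * 2^(d-s)
  have stepA : (Finset.univ.filter
      (fun x : Fin d → Bool => ∑ i, a i * bvToR x i = 0)).card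
      ≤ 𝒜.card * 2 ^ (d - s) := by
    have hmap : ∀ x ∈ Finset.univ.filter
        (fun x : Fin d → Bool => ∑ i, a i * bvToR x i = 0),
        (S.filter (fun i => x i = true), Sᶜ.filter (fun i => x i = true))
          ∈ 𝒜 ×ˢ Sᶜ.powerset := by
      intro x hx
      rw [Finset.mem_filter] at hx
      have hx0 : ∑ i, a i * bvToR x i = 0 := hx.2
      have hterm : ∀ i : Fin d, a i * bvToR x i
          = if (a i ≠ 0 ∧ x i = true) then a i else 0 := by
        intro i
        by_cases h1 : a i = 0 <;> by_cases h2 : x i = true <;>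
          simp [bvToR, h1, h2]
      have hsum : ∑ i ∈ S.filter (fun i => x i = true), a i = 0 := by
        have : ∑ i, a i * bvToR x i
            = ∑ i ∈ Finset.univ.filter (fun i => a i ≠ 0 ∧ x i = true), a i := by
          rw [Finset.sum_filter]
          exact Finset.sum_congr rfl (fun i _ => hterm i)
        have hfe : Finset.univ.filter (fun i => a i ≠ 0 ∧ x i = true)
            = S.filter (fun i => x i = true) := by
          rw [hSdef, Finset.filter_filter]
        rw [hfe] at this
        rw [← this]; exact hx0
      refine Finset.mem_product.mpr ⟨?_, ?_⟩
      · rw [h𝒜def, Finset.mem_filter, Finset.mem_powerset]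
        exact ⟨Finset.filter_subset _ _, hsum⟩
      · rw [Finset.mem_powerset]; exact Finset.filter_subset _ _
    have hinj : ∀ x ∈ Finset.univ.filter
        (fun x : Fin d → Bool => ∑ i, a i * bvToR x i = 0),
        ∀ y ∈ Finset.univ.filter
        (fun x : Fin d → Bool => ∑ i, a i * bvToR x i = 0),
        (S.filter (fun i => x i = true), Sᶜ.filter (fun i => x i = true))
          = (S.filter (fun i => y i = true), Sᶜ.filter (fun i => y i = true))
          → x = y := by
      intro x _ y _ hEq
      have h1 := congrArg Prod.fst hEq
      have h2 := congrArg Prod.snd hEq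
      simp only at h1 h2
      funext i
      by_cases hiS : i ∈ S
      · have h3 := Finset.ext_iff.mp h1 i
        simp [hiS] at h3
        exact h3
      · have hiSc : i ∈ Sᶜ := Finset.mem_compl.mpr hiS
        have h3 := Finset.ext_iff.mp h2 i
        simp [hiSc] at h3
        exact h3
    calc (Finset.univ.filter
        (fun x : Fin d → Bool => ∑ i, a i * bvToR x i = 0)).card
        ≤ (𝒜 ×ˢ Sᶜ.powerset).card := Finset.card_le_card_of_injOn _ hmap hinj
      _ = 𝒜.card * 2 ^ (d - s) := by
          rw [Finset.card_product, Finset.card_powerset, Finset.card_compl,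
            Fintype.card_fin, hs]
  -- Step B : |𝒜| ≤ |ℬ| where ℬ is the positive-coefficient version
  set N : Finset (Fin d) := S.filter (fun i => a i < 0) with hNdef
  set c : ℝ := - ∑ i ∈ N, a i with hcdef
  set ℬ : Finset (Finset (Fin d)) :=
    S.powerset.filter (fun T => ∑ i ∈ T, |a i| = c) with hℬdef
  have hNS : N ⊆ S := Finset.filter_subset _ _
  have stepB : 𝒜.card ≤ ℬ.card := by
    apply Finset.card_le_card_of_injOn (fun T => symmDiff T N)
    · intro T hT
      rw [h𝒜def, Finset.mem_coe, Finset.mem_filter, Finset.mem_powerset] at hT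
      obtain ⟨hTS, hT0⟩ := hT
      rw [hℬdef, Finset.mem_coe, Finset.mem_filter, Finset.mem_powerset]
      constructor
      · exact le_trans symmDiff_le_sup (sup_le hTS hNS)
      · have hsd : symmDiff T N = (T \ N) ∪ (N \ T) := by
          rw [symmDiff_def]; rfl
        have hdisj : Disjoint (T \ N) (N \ T) := disjoint_sdiff_sdiff
        beta_reduce
        rw [hsd, Finset.sum_union hdisj]
        have e1 : ∑ i ∈ T \ N, |a i| = ∑ i ∈ T \ N, a i := by
          apply Finset.sum_congr rfl
          intro i hi
          rw [Finset.mem_sdiff] at hi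
          have hne : a i ≠ 0 := (hmemS i).mp (hTS hi.1)
          have hnn : ¬ a i < 0 := by
            intro h
            apply hi.2
            rw [hNdef, Finset.mem_filter]
            exact ⟨hTS hi.1, h⟩
          exact abs_of_pos (lt_of_le_of_ne (not_lt.mp hnn) (Ne.symm hne))
        have e2 : ∑ i ∈ N \ T, |a i| = ∑ i ∈ N \ T, (-a i) := by
          apply Finset.sum_congr rfl
          intro i hi
          rw [Finset.mem_sdiff, hNdef, Finset.mem_filter] at hi
          exact abs_of_neg hi.1.2
        have e3 : ∑ i ∈ T \ N, a i = ∑ i ∈ T, a i - ∑ i ∈ T ∩ N, a i := by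
          rw [← Finset.sdiff_inter_self_left T N]
          exact Finset.sum_sdiff_eq_sub Finset.inter_subset_left
        have e4 : ∑ i ∈ N \ T, a i = ∑ i ∈ N, a i - ∑ i ∈ T ∩ N, a i := by
          rw [← Finset.sdiff_inter_self_left N T, Finset.inter_comm N T]
          exact Finset.sum_sdiff_eq_sub Finset.inter_subset_right
        rw [e1, e2, Finset.sum_neg_distrib, e3, e4, hT0, hcdef]
        ring
    · intro T hT T' hT' hEq
      have h5 := congrArg (fun U => symmDiff U N) hEq
      simpa only [symmDiff_symmDiff_cancel_right] using h5
  -- Step C : ℬ is an antichain, so |ℬ| ≤ C(s, s/2)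
  have stepC : ℬ.card ≤ s.choose (s / 2) := by
    have hcardS : S.card = s := hs
    rw [← hcardS]
    apply sperner_ground S
    · intro T hT
      rw [hℬdef, Finset.mem_filter, Finset.mem_powerset] at hT
      exact hT.1
    · intro T hT T' hT' hsubTT'
      rw [hℬdef, Finset.mem_filter, Finset.mem_powerset] at hT hT'
      by_contra hne
      have hnonempty : (T' \ T).Nonempty := by
        rw [Finset.sdiff_nonempty]
        intro h
        exact hne (subset_antisymm hsubTT' h)
      have hpos : 0 < ∑ i ∈ T' \ T, |a i| := by
        apply Finset.sum_pos
        · intro i hi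
          rw [Finset.mem_sdiff] at hi
          exact abs_pos.mpr ((hmemS i).mp (hT'.1 hi.1))
        · exact hnonempty
      have hsplit : ∑ i ∈ T' \ T, |a i| + ∑ i ∈ T, |a i| = ∑ i ∈ T', |a i| :=
        Finset.sum_sdiff hsubTT'
      rw [hT.2, hT'.2] at hsplit
      linarith
  calc (Finset.univ.filter
      (fun x : Fin d → Bool => ∑ i, a i * bvToR x i = 0)).card
      ≤ 𝒜.card * 2 ^ (d - s) := stepA
    _ ≤ ℬ.card * 2 ^ (d - s) := Nat.mul_le_mul_right _ stepB
    _ ≤ s.choose (s / 2) * 2 ^ (d - s) := Nat.mul_le_mul_right _ stepC
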